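/- Let X be a strongly zero-dimensional metrizable topological space with card(X) ≤ 𝔠. Then for every metric d on X inducing the topology of X and every ε > 0 there exists a strongly rigid metric e on X inducing the topology of X with sup_{x,y∈X} |d(x,y) − e(x,y)| ≤ ε; i.e., the set SR(X) of strongly rigid metrics in Met(X) is dense in (Met(X), D_X). Moreover, if X is σ-compact, then SR(X) is a dense Gδ subset of (Met(X), D_X). -/

import Mathlib

/-- A metric on `X` (as a distance function) that induces the topology of `X`;
an element of the space of metrics `Met(X)`. -/
structure MetricOn (X : Type*) [TopologicalSpace X] where
  toFun : X → X → ℝ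
  symm : ∀ x y, toFun x y = toFun y x
  refl : ∀ x, toFun x x = 0
  eq_of : ∀ x y, toFun x y = 0 → x = y
  triangle : ∀ x y z, toFun x z ≤ toFun x y + toFun y z
  isOpen_iff : ∀ s : Set X, IsOpen s ↔ ∀ x ∈ s, ∃ ε > 0, ∀ y, toFun x y < ε → y ∈ s

/-- The supremum distance `D_X(d,e) = sup_{x,y} |d(x,y) - e(x,y)| ∈ [0,∞]` on `Met(X)`. -/
noncomputable def supDist {X : Type*} [TopologicalSpace X] (d e : MetricOn X) : ENNReal :=
  ⨆ p : X × X, ENNReal.ofReal |d.toFun p.1 p.2 - e.toFun p.1 p.2|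

/-- The topology on `Met(X)` generated by the open balls of the supremum distance. -/
noncomputable instance metricOnTopology (X : Type*) [TopologicalSpace X] :
    TopologicalSpace (MetricOn X) :=
  TopologicalSpace.generateFrom
    {B | ∃ (d : MetricOn X) (ε : ℝ), 0 < ε ∧ B = {e | supDist d e < ENNReal.ofReal ε}}

/-- A metric is strongly rigid if `d(x,y) = d(u,v) ≠ 0` implies `{x,y} = {u,v}`. -/
def StronglyRigid {X : Type*} [TopologicalSpace X] (d : MetricOn X) : Prop :=
  ∀ x y u v : X, d.toFun x y = d.toFun u v → d.toFun x y ≠ 0 →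
    ({x, y} : Set X) = ({u, v} : Set X)

/-- A space is strongly zero-dimensional if any two disjoint closed sets are separated
by a clopen set. -/
def StronglyZeroDim (X : Type*) [TopologicalSpace X] : Prop :=
  ∀ A B : Set X, IsClosed A → IsClosed B → A ∩ B = ∅ →
    ∃ V : Set X, IsClopen V ∧ A ⊆ V ∧ V ∩ B = ∅

namespace SR13
open Set Topology

variable {X : Type*} [TopologicalSpace X]

theorem _root_.MetricOn.nonneg (d : MetricOn X) (x y : X) : 0 ≤ d.toFun x y := by
  have h := d.triangle x y x
  rw [d.refl x, d.symm y x] at h; linarith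

theorem _root_.MetricOn.isOpen_ball (d : MetricOn X) (x : X) (r : ℝ) :
    IsOpen {y | d.toFun x y < r} := by
  rw [d.isOpen_iff]
  intro z hz
  simp only [mem_setOf_eq] at hz
  refine ⟨r - d.toFun x z, by linarith, fun y hy => ?_⟩
  have := d.triangle x z y
  simp only [mem_setOf_eq]
  linarith

theorem _root_.MetricOn.abs_sub_le (e : MetricOn X) (x y u v : X) :
    |e.toFun x y - e.toFun u v| ≤ e.toFun u x + e.toFun v y := by
  have t1 := e.triangle x u y
  have t2 := e.triangle u v y
  have t3 := e.triangle u x v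
  have t4 := e.triangle x y v
  have s1 := e.symm u x
  have s2 := e.symm v y
  have s3 := e.symm x u
  have s4 := e.symm y v
  rw [abs_le]
  constructor <;> linarith

theorem _root_.MetricOn.continuousFun (e : MetricOn X) :
    Continuous fun p : X × X => e.toFun p.1 p.2 := by
  rw [continuous_iff_continuousAt]
  rintro ⟨x₀, y₀⟩
  rw [ContinuousAt, Metric.tendsto_nhds]
  intro ε hε
  have hU : IsOpen {x | e.toFun x₀ x < ε/2} := e.isOpen_ball x₀ (ε/2)
  have hV : IsOpen {y | e.toFun y₀ y < ε/2} := e.isOpen_ball y₀ (ε/2)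
  have hmem : ({x | e.toFun x₀ x < ε/2} ×ˢ {y | e.toFun y₀ y < ε/2}) ∈ nhds (x₀, y₀) :=
    prod_mem_nhds (hU.mem_nhds (by simpa [e.refl] using half_pos hε))
      (hV.mem_nhds (by simpa [e.refl] using half_pos hε))
  filter_upwards [hmem] with p hp
  obtain ⟨h1, h2⟩ := hp
  simp only [mem_setOf_eq] at h1 h2
  have := e.abs_sub_le p.1 p.2 x₀ y₀
  rw [Real.dist_eq]
  linarith

theorem supDist_le_of {d e : MetricOn X} {δ : ℝ}
    (h : ∀ x y, |d.toFun x y - e.toFun x y| ≤ δ) :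
    supDist d e ≤ ENNReal.ofReal δ :=
  iSup_le fun p => ENNReal.ofReal_le_ofReal (h p.1 p.2)

theorem abs_lt_of_supDist_lt {d e : MetricOn X} {δ : ℝ} (hδ : 0 < δ)
    (h : supDist d e < ENNReal.ofReal δ) (x y : X) :
    |d.toFun x y - e.toFun x y| < δ := by
  have h2 : ENNReal.ofReal |d.toFun x y - e.toFun x y| < ENNReal.ofReal δ :=
    lt_of_le_of_lt (le_iSup (fun p : X × X => ENNReal.ofReal |d.toFun p.1 p.2 - e.toFun p.1 p.2|)
      (x, y)) h
  rwa [ENNReal.ofReal_lt_ofReal_iff hδ] at h2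

theorem supDist_triangle (a b c : MetricOn X) : supDist a c ≤ supDist a b + supDist b c := by
  refine iSup_le fun p => ?_
  have h : |a.toFun p.1 p.2 - c.toFun p.1 p.2| ≤
      |a.toFun p.1 p.2 - b.toFun p.1 p.2| + |b.toFun p.1 p.2 - c.toFun p.1 p.2| :=
    abs_sub_le _ _ _
  calc ENNReal.ofReal |a.toFun p.1 p.2 - c.toFun p.1 p.2|
      ≤ ENNReal.ofReal (|a.toFun p.1 p.2 - b.toFun p.1 p.2| +
        |b.toFun p.1 p.2 - c.toFun p.1 p.2|) := ENNReal.ofReal_le_ofReal h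
    _ ≤ ENNReal.ofReal |a.toFun p.1 p.2 - b.toFun p.1 p.2| +
        ENNReal.ofReal |b.toFun p.1 p.2 - c.toFun p.1 p.2| := ENNReal.ofReal_add_le
    _ ≤ supDist a b + supDist b c :=
        add_le_add
          (le_iSup (fun p : X × X => ENNReal.ofReal |a.toFun p.1 p.2 - b.toFun p.1 p.2|) p)
          (le_iSup (fun p : X × X => ENNReal.ofReal |b.toFun p.1 p.2 - c.toFun p.1 p.2|) p)

def MBall (d : MetricOn X) (r : ℝ) : Set (MetricOn X) := {e | supDist d e < ENNReal.ofReal r}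

theorem isOpen_MBall (d : MetricOn X) {r : ℝ} (hr : 0 < r) : IsOpen (MBall d r) := by
  show TopologicalSpace.GenerateOpen _ _
  exact TopologicalSpace.GenerateOpen.basic _ ⟨d, r, hr, rfl⟩

theorem exists_ball_subset {O : Set (MetricOn X)} (hO : IsOpen O) :
    ∀ e ∈ O, ∃ r > (0:ℝ), MBall e r ⊆ O := by
  have hO' : TopologicalSpace.GenerateOpen
      {B | ∃ (d : MetricOn X) (ε : ℝ), 0 < ε ∧ B = {e | supDist d e < ENNReal.ofReal ε}} O := hO
  clear hO
  induction hO' with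
  | @basic s hs =>
    obtain ⟨d, ε, hε, rfl⟩ := hs
    intro e he
    simp only [mem_setOf_eq] at he
    have hne : supDist d e ≠ ⊤ := (lt_of_lt_of_le he le_top).ne
    obtain ⟨t, ht0, hts⟩ : ∃ t : ℝ, 0 ≤ t ∧ supDist d e = ENNReal.ofReal t :=
      ⟨(supDist d e).toReal, ENNReal.toReal_nonneg, (ENNReal.ofReal_toReal hne).symm⟩
    rw [hts] at he
    have hlt : t < ε := by rwa [ENNReal.ofReal_lt_ofReal_iff hε] at he
    refine ⟨ε - t, by linarith, ?_⟩
    intro f hf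
    simp only [MBall, mem_setOf_eq] at hf ⊢
    calc supDist d f ≤ supDist d e + supDist e f := supDist_triangle _ _ _
      _ < ENNReal.ofReal t + ENNReal.ofReal (ε - t) := by
          rw [hts]; exact ENNReal.add_lt_add_left ENNReal.ofReal_ne_top hf
      _ = ENNReal.ofReal ε := by
          rw [← ENNReal.ofReal_add ht0 (by linarith)]; norm_num
  | univ => exact fun e _ => ⟨1, one_pos, fun f _ => trivial⟩
  | @inter s t _ _ ihs iht =>
    intro e he
    obtain ⟨r1, hr1, h1⟩ := ihs e he.1
    obtain ⟨r2, hr2, h2⟩ := iht e he.2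
    refine ⟨min r1 r2, lt_min hr1 hr2, fun f hf => ⟨h1 ?_, h2 ?_⟩⟩ <;>
      · simp only [MBall, mem_setOf_eq] at hf ⊢
        exact lt_of_lt_of_le hf (ENNReal.ofReal_le_ofReal (by simp))
  | @sUnion S hS ih =>
    rintro e ⟨s, hsS, hes⟩
    obtain ⟨r, hr, h⟩ := ih s hsS e hes
    exact ⟨r, hr, fun f hf => ⟨s, hsS, h hf⟩⟩

/-! ### geometric sums -/

noncomputable def pw (n : ℕ) : ℝ := (4:ℝ)⁻¹ ^ n

theorem pw_pos (n : ℕ) : 0 < pw n := pow_pos (by norm_num) n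

theorem pw_nonneg (n : ℕ) : 0 ≤ pw n := (pw_pos n).le

theorem pw_add (a b : ℕ) : pw (a + b) = pw a * pw b := pow_add _ _ _

theorem pw_antitone : Antitone pw := fun a b hab =>
  pow_le_pow_of_le_one (by norm_num) (by norm_num) hab

theorem pw_le_pw {a b : ℕ} (h : a ≤ b) : pw b ≤ pw a := pw_antitone h

theorem summable_pw : Summable pw := summable_geometric_of_lt_one (by norm_num) (by norm_num)

end SR13
namespace SR13
open Set Topology

/-! ### sum estimates -/

theorem summable_ite_pw {P : ℕ → Prop} [DecidablePred P] (a : ℕ) :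
    Summable (fun u => if P u then pw (a + 2*u) else 0) := by
  apply Summable.of_nonneg_of_le (g := fun u => if P u then pw (a + 2*u) else 0)
    (f := fun u => pw a * ((4:ℝ)⁻¹^2) ^ u)
  · intro u; split <;> simp [pw_nonneg, pw_pos, le_refl]
  · intro u
    have : pw (a + 2*u) = pw a * ((4:ℝ)⁻¹^2)^u := by
      rw [pw_add]; congr 1; rw [pw, ← pow_mul]
    split
    · rw [this]
    · exact mul_nonneg (pw_nonneg a) (by positivity)
  · exact (summable_geometric_of_lt_one (by norm_num) (by norm_num)).mul_left _

set_option maxHeartbeats 1000000 in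
theorem tsum_ite_pw_le {P : ℕ → Prop} [DecidablePred P] (a M : ℕ)
    (hP : ∀ u, P u → M ≤ u) :
    (∑' u, if P u then pw (a + 2*u) else 0) ≤ pw (a + 2*M) * (16/15) := by
  have h1 : (∑' u, if P u then pw (a + 2*u) else 0) ≤
      (∑' u, if M ≤ u then pw (a + 2*u) else 0) := by
    apply Summable.tsum_le_tsum _ (summable_ite_pw a) (summable_ite_pw a)
    intro u
    by_cases h : P u
    · simp [h, hP u h]
    · simp only [h, if_false]
      split <;> simp [pw_nonneg]
  refine le_trans h1 ?_
  have hsum : Summable (fun u => if M ≤ u then pw (a + 2*u) else 0) := summable_ite_pw a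
  have hsplit := Summable.sum_add_tsum_nat_add (f := fun u => if M ≤ u then pw (a + 2*u) else 0) M hsum
  have hzero : (∑ i ∈ Finset.range M, if M ≤ i then pw (a + 2*i) else 0) = 0 := by
    apply Finset.sum_eq_zero
    intro i hi
    rw [Finset.mem_range] at hi
    simp [Nat.not_le.mpr hi]
  have htail : (∑' i : ℕ, if M ≤ i + M then pw (a + 2*(i+M)) else 0)
      = pw (a + 2*M) * (1 - (4:ℝ)⁻¹^2)⁻¹ := by
    have : ∀ i : ℕ, (if M ≤ i + M then pw (a + 2*(i+M)) else 0)
        = pw (a + 2*M) * ((4:ℝ)⁻¹^2)^i := by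
      intro i
      rw [if_pos (Nat.le_add_left M i)]
      rw [show a + 2*(i+M) = (a + 2*M) + 2*i by ring, pw_add]
      congr 1
      rw [pw, ← pow_mul, mul_comm 2 i]
    rw [tsum_congr this, tsum_mul_left,
      tsum_geometric_of_lt_one (by norm_num) (by norm_num)]
  rw [← hsplit, hzero, zero_add, htail]
  have : ((1:ℝ) - (4:ℝ)⁻¹^2)⁻¹ = 16/15 := by norm_num
  rw [this]

/-! ### digit uniqueness -/

set_option maxHeartbeats 1000000 in
theorem digit_ext_aux {s : ℝ} (h0 : 0 < s) (h3 : s ≤ 1/3) (f g : ℕ → Bool) (M : ℕ)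
    (h : (∑' u, if f u then s^u else 0) = ∑' u, if g u then s^u else 0)
    (hlt : ∀ v < M, f v = g v) (hfM : f M = true) (hgM : g M = false) : False := by
  have hs1 : s < 1 := by linarith
  have hsum : Summable (fun u : ℕ => s ^ u) := summable_geometric_of_lt_one h0.le hs1
  have hsf : Summable (fun u => if f u then s^u else 0) := by
    apply Summable.of_nonneg_of_le _ _ hsum
    · intro u; split <;> positivity
    · intro u; split <;> [exact le_refl _; positivity]
  have hsg : Summable (fun u => if g u then s^u else 0) := by
    apply Summable.of_nonneg_of_le _ _ hsum
    · intro u; split <;> positivity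
    · intro u; split <;> [exact le_refl _; positivity]
  have hf' := Summable.sum_add_tsum_nat_add (f := fun u => if f u then s^u else 0) (M+1) hsf
  have hg' := Summable.sum_add_tsum_nat_add (f := fun u => if g u then s^u else 0) (M+1) hsg
  have hrange : (∑ i ∈ Finset.range (M+1), if f i then s^i else 0)
      = (∑ i ∈ Finset.range M, if g i then s^i else 0) + s^M := by
    rw [Finset.sum_range_succ, hfM, if_pos rfl]
    congr 1
    apply Finset.sum_congr rfl
    intro i hi
    rw [Finset.mem_range] at hi
    rw [hlt i hi]
  have hrange' : (∑ i ∈ Finset.range (M+1), if g i then s^i else 0)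
      = (∑ i ∈ Finset.range M, if g i then s^i else 0) := by
    rw [Finset.sum_range_succ, hgM]
    simp
  have htailf : (0:ℝ) ≤ ∑' i : ℕ, if f (i + (M+1)) then s^(i+(M+1)) else 0 := by
    apply tsum_nonneg
    intro i; split <;> positivity
  have htailg : (∑' i : ℕ, if g (i + (M+1)) then s^(i+(M+1)) else 0)
      ≤ s^(M+1) * (1-s)⁻¹ := by
    have hb : ∀ i : ℕ, (if g (i + (M+1)) then s^(i+(M+1)) else 0) ≤ s^(M+1) * s^i := by
      intro i
      have : s^(i+(M+1)) = s^(M+1) * s^i := by rw [pow_add]; ring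
      split
      · rw [this]
      · positivity
    calc (∑' i : ℕ, if g (i + (M+1)) then s^(i+(M+1)) else 0)
        ≤ ∑' i : ℕ, s^(M+1) * s^i := by
          apply Summable.tsum_le_tsum hb ((summable_nat_add_iff (M+1)).mpr hsg) (hsum.mul_left _)
      _ = s^(M+1) * (1-s)⁻¹ := by rw [tsum_mul_left, tsum_geometric_of_lt_one h0.le hs1]
  have hkey : s^M ≤ s^(M+1) * (1-s)⁻¹ := by
    have e1 : (∑ i ∈ Finset.range M, if g i then s^i else 0) + s^M +
        (∑' i : ℕ, if f (i + (M+1)) then s^(i+(M+1)) else 0)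
        = (∑ i ∈ Finset.range M, if g i then s^i else 0) +
        (∑' i : ℕ, if g (i + (M+1)) then s^(i+(M+1)) else 0) := by
      rw [← hrange, ← hrange']
      rw [hf', hg', h]
    linarith
  have : s^(M+1) * (1-s)⁻¹ < s^M := by
    have hp : (0:ℝ) < s^M := pow_pos h0 M
    rw [pow_succ]
    have h1s : (0:ℝ) < 1 - s := by linarith
    rw [mul_assoc]
    have : s * (1-s)⁻¹ < 1 := by
      rw [mul_inv_lt_iff₀ h1s]
      linarith
    nlinarith
  linarith

theorem digit_ext {s : ℝ} (h0 : 0 < s) (h3 : s ≤ 1/3) (f g : ℕ → Bool)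
    (h : (∑' u, if f u then s^u else 0) = ∑' u, if g u then s^u else 0) : f = g := by
  by_contra hne
  have hex : ∃ u, f u ≠ g u := Function.ne_iff.mp hne
  classical
  set M := Nat.find hex with hM
  have hMne : f M ≠ g M := Nat.find_spec hex
  have hlt : ∀ v < M, f v = g v := fun v hv => by
    by_contra hc
    exact Nat.find_min hex hv hc
  rcases Bool.eq_false_or_eq_true (f M) with hf | hf
  · rcases Bool.eq_false_or_eq_true (g M) with hg | hg
    · exact hMne (hf.trans hg.symm)
    · exact digit_ext_aux h0 h3 f g M h hlt hf hg
  · rcases Bool.eq_false_or_eq_true (g M) with hg | hg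
    · exact digit_ext_aux h0 h3 g f M h.symm (fun v hv => (hlt v hv).symm) hg hf
    · exact hMne (hf.trans hg.symm)

end SR13
namespace SR13
open Set Topology

variable {X : Type*} [TopologicalSpace X]

theorem exists_partition [TopologicalSpace.MetrizableSpace X] (hX : StronglyZeroDim X)
    (g : X → Set X) (hgo : ∀ x, IsOpen (g x)) (hgm : ∀ x, x ∈ g x) :
    ∃ C : X → Set X, (∀ x, IsClopen (C x)) ∧ (∀ x, x ∈ C x) ∧
      (∀ x y, y ∈ C x → C y = C x) ∧ (∀ x, ∃ z, C x ⊆ g z) := by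
  letI : MetricSpace X := TopologicalSpace.metrizableSpaceMetric X
  have hcov : ⋃ i, g i = univ := eq_univ_of_forall fun x => mem_iUnion.mpr ⟨x, hgm x⟩
  obtain ⟨v, hvo, hvu, hvl, hvs⟩ := precise_refinement g hgo hcov
  obtain ⟨w, hwcov, hwo, hwc⟩ := exists_subset_iUnion_closure_subset isClosed_univ hvo
      (fun x _ => hvl.point_finite x) (by rw [hvu])
  have key : ∀ i, ∃ V : Set X, IsClopen V ∧ w i ⊆ V ∧ V ⊆ v i := by
    intro i
    obtain ⟨V, hV, h1, h2⟩ := hX (closure (w i)) (v i)ᶜ isClosed_closure (hvo i).isClosed_compl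
      (by
        rw [Set.eq_empty_iff_forall_notMem]
        rintro x ⟨hx1, hx2⟩
        exact hx2 (hwc i hx1))
    refine ⟨V, hV, fun x hx => h1 (subset_closure hx), fun x hx => ?_⟩
    by_contra hc
    exact Set.eq_empty_iff_forall_notMem.mp h2 x ⟨hx, hc⟩
  choose V hVclo hVsub hVsub' using key
  have hVlf : LocallyFinite V := hvl.subset hVsub'
  set r : X → X → Prop := WellOrderingRel with hr
  have hwf : WellFounded r := (IsWellFounded.wf : WellFounded (WellOrderingRel : X → X → Prop))
  set W : X → Set X := fun i => V i ∩ (⋃ j : {j // r j i}, V j.1)ᶜ with hW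
  have hUopen : ∀ i, IsOpen (⋃ j : {j // r j i}, V j.1) :=
    fun i => isOpen_iUnion fun j => (hVclo _).2
  have hUclosed : ∀ i, IsClosed (⋃ j : {j // r j i}, V j.1) := fun i =>
    (hVlf.comp_injective Subtype.val_injective).isClosed_iUnion (fun j => (hVclo j.1).1)
  have hWclopen : ∀ i, IsClopen (W i) := fun i =>
    ⟨(hVclo i).1.inter (hUopen i).isClosed_compl, (hVclo i).2.inter (hUclosed i).isOpen_compl⟩
  have hne : ∀ x : X, {i | x ∈ V i}.Nonempty := by
    intro x
    have hx : x ∈ ⋃ i, w i := hwcov (mem_univ x)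
    obtain ⟨i, hi⟩ := mem_iUnion.mp hx
    exact ⟨i, hVsub i hi⟩
  set idx : X → X := fun x => hwf.min {i | x ∈ V i} (hne x) with hidx
  have hmemW : ∀ x, x ∈ W (idx x) := by
    intro x
    refine ⟨hwf.min_mem _ (hne x), ?_⟩
    intro hx
    obtain ⟨⟨j, hj⟩, hxj⟩ := mem_iUnion.mp hx
    exact hwf.not_lt_min {i | x ∈ V i} hxj hj
  have hidx_eq : ∀ x i, x ∈ W i → idx x = i := by
    intro x i hxi
    obtain ⟨hxV, hxU⟩ := hxi
    rcases @trichotomous X r _ (idx x) i with h | h | h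
    · exfalso
      apply hxU
      exact mem_iUnion.mpr ⟨⟨idx x, h⟩, hwf.min_mem _ (hne x)⟩
    · exact h
    · exfalso
      exact hwf.not_lt_min {i | x ∈ V i} hxV h
  refine ⟨fun x => W (idx x), fun x => hWclopen _, fun x => hmemW x, ?_, ?_⟩
  · intro x y hy
    show W (idx y) = W (idx x)
    rw [hidx_eq y (idx x) hy]
  · intro x
    refine ⟨idx x, ?_⟩
    intro y hy
    exact hvs (idx x) (hVsub' (idx x) hy.1)

/-- nested sequence of clopen partitions with controlled mesh -/
structure Cells (X : Type*) [TopologicalSpace X] (d : MetricOn X) (c : ℕ) where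
  C : ℕ → X → Set X
  clopen : ∀ k x, IsClopen (C k x)
  mem : ∀ k x, x ∈ C k x
  part : ∀ k x y, y ∈ C k x → C k y = C k x
  nested : ∀ k x, C (k+1) x ⊆ C k x
  zero : ∀ x, C 0 x = Set.univ
  small : ∀ k, 1 ≤ k → ∀ x a b, a ∈ C k x → b ∈ C k x → d.toFun a b ≤ pw (c+k) / 64

theorem exists_cells [TopologicalSpace.MetrizableSpace X] (hX : StronglyZeroDim X)
    (d : MetricOn X) (c : ℕ) : Nonempty (Cells X d c) := by
  classical
  set Props : ℕ → (X → Set X) → Prop := fun n Cc =>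
    (∀ x, IsClopen (Cc x)) ∧ (∀ x, x ∈ Cc x) ∧ (∀ x y, y ∈ Cc x → Cc y = Cc x) ∧
    (1 ≤ n → ∀ x a b, a ∈ Cc x → b ∈ Cc x → d.toFun a b ≤ pw (c+n) / 64) with hProps
  have step : ∀ n (Cp : {Cc : X → Set X // Props n Cc}),
      ∃ Cn : X → Set X, Props (n+1) Cn ∧ ∀ x, Cn x ⊆ Cp.1 x := by
    rintro n ⟨Cp, h1, h2, h3, _⟩
    set δ : ℝ := pw (c+(n+1)) / 64 with hδ
    have hδpos : 0 < δ := by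
      have := pw_pos (c+(n+1)); positivity
    set g : X → Set X := fun x => Cp x ∩ {y | d.toFun x y < δ/2} with hg
    obtain ⟨C, hclo, hmem, hpart, hsub⟩ := exists_partition hX g
      (fun x => (h1 x).2.inter (d.isOpen_ball x (δ/2)))
      (fun x => ⟨h2 x, by simp [d.refl]; positivity⟩)
    refine ⟨C, ⟨hclo, hmem, hpart, ?_⟩, ?_⟩
    · intro _ x a b ha hb
      obtain ⟨z, hz⟩ := hsub x
      have hza := (hz ha).2
      have hzb := (hz hb).2
      simp only [mem_setOf_eq] at hza hzb
      have := d.triangle a z b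
      rw [d.symm a z] at this
      linarith
    · intro x y hy
      obtain ⟨z, hz⟩ := hsub x
      have hxz : Cp x = Cp z := h3 z x (hz (hmem x)).1
      show y ∈ Cp x
      rw [hxz]
      exact (hz hy).1
  set F : ∀ n : ℕ, {Cc : X → Set X // Props n Cc} := fun n =>
    Nat.rec ⟨fun _ => univ, fun _ => isClopen_univ, fun _ => mem_univ _,
      fun _ _ _ => rfl, fun h => absurd h (by norm_num)⟩
      (fun n ih => ⟨(step n ih).choose, (step n ih).choose_spec.1⟩) n
    with hF
  have hFsucc : ∀ n, (F (n+1)).1 = (step n (F n)).choose := fun n => rfl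
  have hnested : ∀ n x, (F (n+1)).1 x ⊆ (F n).1 x := by
    intro n
    rw [hFsucc n]
    exact (step n (F n)).choose_spec.2
  exact ⟨{
    C := fun k => (F k).1
    clopen := fun k => (F k).2.1
    mem := fun k => (F k).2.2.1
    part := fun k => (F k).2.2.2.1
    nested := hnested
    zero := fun x => rfl
    small := fun k hk => (F k).2.2.2.2 hk }⟩

end SR13
namespace SR13
open Set Topology

section Construction

variable {X : Type*} [TopologicalSpace X] {d : MetricOn X} {c : ℕ}

/-- first level at which the cells of `x` and `y` differ -/
noncomputable def NN (cs : Cells X d c) (x y : X) : ℕ := sInf {k | cs.C k x ≠ cs.C k y}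

noncomputable def nodeAt (cs : Cells X d c) (k : ℕ) (x y : X) : Set (Set X) :=
  {cs.C k x, cs.C k y}

noncomputable def sE (cs : Cells X d c) (x y : X) : ℝ :=
  sInf {t : ℝ | ∃ a ∈ cs.C (NN cs x y) x, ∃ b ∈ cs.C (NN cs x y) y, t = d.toFun a b}

def GG (c m : ℕ) : ℕ := c + m + 3

noncomputable def A0 (cs : Cells X d c) (x y : X) : ℝ :=
  (⌈sE cs x y * 4 ^ (GG c (NN cs x y))⌉₊ : ℝ) * pw (GG c (NN cs x y))

def posn (c u : ℕ) : ℕ := c + 10 + 2 * u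

noncomputable def tl (cs : Cells X d c) (α : ℕ × Set (Set X) → ℕ → Bool) (x y : X) : ℝ :=
  ∑' u : ℕ, if (decide (NN cs x y < (Nat.unpair u).1)
      && α ((Nat.unpair u).1, nodeAt cs (Nat.unpair u).1 x y) (Nat.unpair u).2) = true
    then pw (posn c u) else 0

open Classical in
noncomputable def eF (cs : Cells X d c) (α : ℕ × Set (Set X) → ℕ → Bool) (x y : X) : ℝ :=
  if x = y then 0 else A0 cs x y + pw (c + NN cs x y) + tl cs α x y

variable (cs : Cells X d c) (α : ℕ × Set (Set X) → ℕ → Bool)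

theorem C_eq_step {x u : X} {k : ℕ} (h : cs.C (k+1) x = cs.C (k+1) u) :
    cs.C k x = cs.C k u := by
  have hu : u ∈ cs.C (k+1) x := h ▸ cs.mem (k+1) u
  have := cs.nested k x hu
  exact (cs.part k x u this).symm

theorem C_eq_down {x u : X} {k : ℕ} (h : cs.C k x = cs.C k u) :
    ∀ j, j ≤ k → cs.C j x = cs.C j u := by
  induction k with
  | zero => intro j hj; interval_cases j; exact h
  | succ k ih =>
    intro j hj
    rcases Nat.eq_or_lt_of_le hj with rfl | hj'
    · exact h
    · exact ih (C_eq_step cs h) j (Nat.lt_succ_iff.mp hj')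

theorem NN_set_nonempty {x y : X} (hxy : x ≠ y) : {k | cs.C k x ≠ cs.C k y}.Nonempty := by
  have hd : 0 < d.toFun x y := by
    rcases lt_or_eq_of_le (d.nonneg x y) with h | h
    · exact h
    · exact absurd (d.eq_of x y h.symm) hxy
  obtain ⟨k, hk⟩ := exists_pow_lt_of_lt_one hd (by norm_num : (4:ℝ)⁻¹ < 1)
  refine ⟨k + 1, fun hC => ?_⟩
  have hy : y ∈ cs.C (k+1) x := hC ▸ cs.mem (k+1) y
  have hs := cs.small (k+1) (Nat.le_add_left 1 k) x x y (cs.mem (k+1) x) hy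
  have h1 : pw (c + (k+1)) / 64 ≤ pw (k+1) := by
    have := pw_le_pw (Nat.le_add_left (k+1) c)
    have := pw_pos (k+1)
    linarith
  have h2 : pw (k+1) ≤ pw k := pw_le_pw (Nat.le_succ k)
  have : pw k < d.toFun x y := hk
  simp only [pw] at *
  linarith

theorem NN_mem {x y : X} (hxy : x ≠ y) : cs.C (NN cs x y) x ≠ cs.C (NN cs x y) y :=
  Nat.sInf_mem (NN_set_nonempty cs hxy)

theorem C_eq_of_lt {x y : X} {k : ℕ} (h : k < NN cs x y) : cs.C k x = cs.C k y := by
  by_contra hc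
  exact absurd (Nat.sInf_le hc) (Nat.not_le.mpr h)

theorem NN_pos {x y : X} (hxy : x ≠ y) : 0 < NN cs x y := by
  rcases Nat.eq_zero_or_pos (NN cs x y) with h | h
  · exfalso
    apply NN_mem cs hxy
    rw [h, cs.zero x, cs.zero y]
  · exact h

theorem NN_eq {x y : X} {m : ℕ} (h1 : ∀ k, k < m → cs.C k x = cs.C k y)
    (h2 : cs.C m x ≠ cs.C m y) : NN cs x y = m := by
  apply le_antisymm (Nat.sInf_le h2)
  by_contra hc
  have hm : NN cs x y < m := Nat.not_le.mp hc
  have hxy : x ≠ y := by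
    intro he
    exact h2 (by rw [he])
  exact NN_mem cs hxy (h1 _ hm)

theorem NN_symm (x y : X) : NN cs x y = NN cs y x := by
  unfold NN
  congr 1
  ext k
  exact ne_comm

theorem C_ne_of_ge {x y : X} (hxy : x ≠ y) {k : ℕ} (h : NN cs x y ≤ k) :
    cs.C k x ≠ cs.C k y := fun hC =>
  NN_mem cs hxy (C_eq_down cs hC _ h)

theorem lt_NN_of_mem {x y : X} (hxy : x ≠ y) {k : ℕ} (h : y ∈ cs.C k x) :
    k < NN cs x y := by
  by_contra hc
  have hk : NN cs x y ≤ k := Nat.not_lt.mp hc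
  exact C_ne_of_ge cs hxy hk (cs.part k x y h).symm

theorem NN_ultra {x y z : X} (hxz : x ≠ z) :
    min (NN cs x y) (NN cs y z) ≤ NN cs x z := by
  by_contra hc
  have h : NN cs x z < min (NN cs x y) (NN cs y z) := Nat.not_le.mp hc
  apply NN_mem cs hxz
  have h1 : cs.C (NN cs x z) x = cs.C (NN cs x z) y :=
    C_eq_of_lt cs (lt_of_lt_of_le h (min_le_left _ _))
  have h2 : cs.C (NN cs x z) y = cs.C (NN cs x z) z :=
    C_eq_of_lt cs (lt_of_lt_of_le h (min_le_right _ _))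
  exact h1.trans h2

/-! `sE` and `A0` bounds -/

theorem sE_set_nonempty (x y : X) :
    {t : ℝ | ∃ a ∈ cs.C (NN cs x y) x, ∃ b ∈ cs.C (NN cs x y) y, t = d.toFun a b}.Nonempty :=
  ⟨d.toFun x y, x, cs.mem _ x, y, cs.mem _ y, rfl⟩

theorem sE_nonneg (x y : X) : 0 ≤ sE cs x y := by
  apply Real.sInf_nonneg
  rintro t ⟨a, _, b, _, rfl⟩
  exact d.nonneg a b

theorem sE_bddBelow (x y : X) : BddBelow
    {t : ℝ | ∃ a ∈ cs.C (NN cs x y) x, ∃ b ∈ cs.C (NN cs x y) y, t = d.toFun a b} := by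
  refine ⟨0, ?_⟩
  rintro t ⟨a, _, b, _, rfl⟩
  exact d.nonneg a b

theorem sE_le (x y : X) : sE cs x y ≤ d.toFun x y :=
  csInf_le (sE_bddBelow cs x y) ⟨x, cs.mem _ x, y, cs.mem _ y, rfl⟩

theorem le_sE {x y : X} (hxy : x ≠ y) :
    d.toFun x y - pw (c + NN cs x y) / 32 ≤ sE cs x y := by
  apply le_csInf (sE_set_nonempty cs x y)
  rintro t ⟨a, ha, b, hb, rfl⟩
  have hN : 1 ≤ NN cs x y := NN_pos cs hxy
  have h1 : d.toFun x a ≤ pw (c + NN cs x y) / 64 :=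
    cs.small _ hN x x a (cs.mem _ x) ha
  have h2 : d.toFun b y ≤ pw (c + NN cs x y) / 64 := by
    have := cs.small _ hN y y b (cs.mem _ y) hb
    rwa [d.symm y b] at this
  have t1 := d.triangle x a y
  have t2 := d.triangle a b y
  linarith

theorem A0_nonneg (x y : X) : 0 ≤ A0 cs x y := by
  apply mul_nonneg _ (pw_nonneg _)
  positivity

theorem sE_le_A0 (x y : X) : sE cs x y ≤ A0 cs x y := by
  unfold A0
  have h4 : (0:ℝ) < 4 ^ (GG c (NN cs x y)) := by positivity
  have hpw : pw (GG c (NN cs x y)) = ((4:ℝ) ^ (GG c (NN cs x y)))⁻¹ := by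
    rw [pw, inv_pow]
  rw [hpw, ← div_eq_mul_inv, le_div_iff₀ h4]
  exact Nat.le_ceil _

theorem A0_le {x y : X} (hxy : x ≠ y) : A0 cs x y ≤ sE cs x y + pw (GG c (NN cs x y)) := by
  unfold A0
  have h4 : (0:ℝ) < 4 ^ (GG c (NN cs x y)) := by positivity
  have hpw : pw (GG c (NN cs x y)) = ((4:ℝ) ^ (GG c (NN cs x y)))⁻¹ := by
    rw [pw, inv_pow]
  have hceil : (⌈sE cs x y * 4 ^ (GG c (NN cs x y))⌉₊ : ℝ) <
      sE cs x y * 4 ^ (GG c (NN cs x y)) + 1 :=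
    Nat.ceil_lt_add_one (by
      have := sE_nonneg cs x y
      positivity)
  rw [hpw, ← div_eq_mul_inv, div_le_iff₀ h4]
  have : (sE cs x y + ((4:ℝ) ^ (GG c (NN cs x y)))⁻¹) * 4 ^ (GG c (NN cs x y))
      = sE cs x y * 4 ^ (GG c (NN cs x y)) + 1 := by
    field_simp
  rw [this]
  exact hceil.le

end Construction
end SR13
namespace SR13
open Set Topology

section Construction2

variable {X : Type*} [TopologicalSpace X] {d : MetricOn X} {c : ℕ}
variable (cs : Cells X d c) (α : ℕ × Set (Set X) → ℕ → Bool)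

/-- integrand of the tail sum -/
noncomputable def tlf (x y : X) (u : ℕ) : ℝ :=
  if (decide (NN cs x y < (Nat.unpair u).1)
      && α ((Nat.unpair u).1, nodeAt cs (Nat.unpair u).1 x y) (Nat.unpair u).2) = true
    then pw (posn c u) else 0

theorem tl_eq (x y : X) : tl cs α x y = ∑' u, tlf cs α x y u := rfl

theorem tlf_nonneg (x y : X) (u : ℕ) : 0 ≤ tlf cs α x y u := by
  unfold tlf; split
  · exact pw_nonneg _
  · exact le_refl 0

theorem tlf_le (x y : X) (u : ℕ) : tlf cs α x y u ≤ pw (posn c u) := by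
  unfold tlf; split
  · exact le_refl _
  · exact pw_nonneg _

theorem summable_tlf (x y : X) : Summable (tlf cs α x y) := by
  have : tlf cs α x y = fun u =>
      if (decide (NN cs x y < (Nat.unpair u).1)
        && α ((Nat.unpair u).1, nodeAt cs (Nat.unpair u).1 x y) (Nat.unpair u).2) = true
      then pw (c + 10 + 2*u) else 0 := rfl
  rw [this]
  exact summable_ite_pw (c + 10)

theorem tl_nonneg (x y : X) : 0 ≤ tl cs α x y :=
  tsum_nonneg (tlf_nonneg cs α x y)

theorem tlf_spec {x y : X} {u : ℕ} (h : tlf cs α x y u ≠ 0) :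
    NN cs x y < (Nat.unpair u).1 ∧
    α ((Nat.unpair u).1, nodeAt cs (Nat.unpair u).1 x y) (Nat.unpair u).2 = true := by
  unfold tlf at h
  split at h
  · next hcond =>
    rw [Bool.and_eq_true, decide_eq_true_iff] at hcond
    exact hcond
  · exact absurd rfl h

theorem tl_le (x y : X) : tl cs α x y ≤ pw (c + 10 + 2*(NN cs x y + 1)) * (16/15) := by
  rw [tl_eq]
  have hb : ∀ u, tlf cs α x y u ≤ (if NN cs x y + 1 ≤ u then pw (c + 10 + 2*u) else 0) := by
    intro u
    by_cases h : tlf cs α x y u = 0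
    · rw [h]; split
      · exact pw_nonneg _
      · exact le_refl _
    · obtain ⟨h1, _⟩ := tlf_spec cs α h
      have hu : NN cs x y + 1 ≤ u := le_trans h1 (Nat.unpair_left_le u)
      rw [if_pos hu]
      exact tlf_le cs α x y u
  calc (∑' u, tlf cs α x y u)
      ≤ ∑' u, if NN cs x y + 1 ≤ u then pw (c + 10 + 2*u) else 0 :=
        Summable.tsum_le_tsum hb (summable_tlf cs α x y) (summable_ite_pw (c+10))
    _ ≤ pw (c + 10 + 2*(NN cs x y + 1)) * (16/15) :=
        tsum_ite_pw_le (c+10) (NN cs x y + 1) (fun u hu => hu)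

theorem tl_le' (x y : X) : tl cs α x y ≤ pw (c + NN cs x y) / 64 := by
  refine le_trans (tl_le cs α x y) ?_
  have h1 : c + 10 + 2*(NN cs x y + 1) = (c + NN cs x y) + (NN cs x y + 12) := by ring
  rw [h1, pw_add]
  have h2 : pw (NN cs x y + 12) ≤ pw 12 := pw_le_pw (by omega)
  have h3 : pw 12 = ((4:ℝ)⁻¹)^12 := rfl
  have h4 : (0:ℝ) < pw (c + NN cs x y) := pw_pos _
  nlinarith [pw_nonneg (NN cs x y + 12)]

/-! ### bounds on eF -/

theorem eF_self (x : X) : eF cs α x x = 0 := by simp [eF]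

theorem eF_of_ne {x y : X} (hxy : x ≠ y) :
    eF cs α x y = A0 cs x y + pw (c + NN cs x y) + tl cs α x y := by
  simp [eF, hxy]

theorem eF_lower {x y : X} (hxy : x ≠ y) :
    d.toFun x y + (31/32) * pw (c + NN cs x y) ≤ eF cs α x y := by
  rw [eF_of_ne cs α hxy]
  have h1 := le_sE cs hxy
  have h2 := sE_le_A0 cs x y
  have h3 := tl_nonneg cs α x y
  have h4 := pw_pos (c + NN cs x y)
  linarith

theorem d_le_eF {x y : X} (hxy : x ≠ y) : d.toFun x y ≤ eF cs α x y := by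
  have := eF_lower cs α hxy
  have := pw_pos (c + NN cs x y)
  linarith

theorem eF_upper {x y : X} (hxy : x ≠ y) :
    eF cs α x y ≤ d.toFun x y + (33/32) * pw (c + NN cs x y) := by
  rw [eF_of_ne cs α hxy]
  have h1 := A0_le cs (x := x) (y := y) hxy
  have h2 := sE_le cs x y
  have h3 := tl_le' cs α x y
  have h4 : pw (GG c (NN cs x y)) = pw (c + NN cs x y) * pw 3 := by
    rw [← pw_add]; rfl
  have h5 : pw 3 = ((4:ℝ)⁻¹)^3 := rfl
  have h6 := pw_pos (c + NN cs x y)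
  nlinarith
  
theorem omega_le_eF {x y : X} (hxy : x ≠ y) : pw (c + NN cs x y) ≤ eF cs α x y := by
  rw [eF_of_ne cs α hxy]
  have := A0_nonneg cs x y
  have := tl_nonneg cs α x y
  linarith

theorem eF_nonneg (x y : X) : 0 ≤ eF cs α x y := by
  by_cases hxy : x = y
  · subst hxy; rw [eF_self]
  · exact le_trans (pw_pos _).le (omega_le_eF cs α hxy)

/-! ### symmetry -/

theorem nodeAt_symm (k : ℕ) (x y : X) : nodeAt cs k x y = nodeAt cs k y x :=
  Set.pair_comm _ _

theorem sE_symm (x y : X) : sE cs x y = sE cs y x := by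
  unfold sE
  rw [NN_symm cs y x]
  congr 1
  ext t
  constructor
  · rintro ⟨a, ha, b, hb, rfl⟩
    exact ⟨b, hb, a, ha, d.symm a b⟩
  · rintro ⟨a, ha, b, hb, rfl⟩
    exact ⟨b, hb, a, ha, d.symm a b⟩

theorem A0_symm (x y : X) : A0 cs x y = A0 cs y x := by
  unfold A0
  rw [sE_symm cs x y, NN_symm cs x y]

theorem tl_symm (x y : X) : tl cs α x y = tl cs α y x := by
  unfold tl
  apply tsum_congr
  intro u
  rw [NN_symm cs x y, nodeAt_symm cs _ x y]

theorem eF_symm (x y : X) : eF cs α x y = eF cs α y x := by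
  unfold eF
  by_cases hxy : x = y
  · subst hxy; simp
  · rw [if_neg hxy, if_neg (Ne.symm hxy), A0_symm cs x y, NN_symm cs x y, tl_symm cs α x y]

end Construction2
end SR13
namespace SR13
open Set Topology

section Construction3

variable {X : Type*} [TopologicalSpace X] {d : MetricOn X} {c : ℕ}
variable (cs : Cells X d c) (α : ℕ × Set (Set X) → ℕ → Bool)

theorem tl_diff {x y z : X} {K : ℕ}
    (hN : NN cs x z = NN cs x y)
    (hnode : ∀ k, NN cs x y < k → k < K → nodeAt cs k x z = nodeAt cs k x y) :
    |tl cs α x z - tl cs α x y| ≤ pw (c + 10 + 2*K) * (16/15) := by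
  have hpt : ∀ u, |tlf cs α x z u - tlf cs α x y u| ≤
      (if K ≤ (Nat.unpair u).1 then pw (c + 10 + 2*u) else 0) := by
    intro u
    by_cases hk : K ≤ (Nat.unpair u).1
    · rw [if_pos hk]
      have h1 := tlf_le cs α x z u
      have h2 := tlf_le cs α x y u
      have h3 := tlf_nonneg cs α x z u
      have h4 := tlf_nonneg cs α x y u
      rw [abs_sub_le_iff]
      constructor <;> · simp only [posn] at h1 h2; linarith
    · rw [if_neg hk]
      have heq : tlf cs α x z u = tlf cs α x y u := by
        unfold tlf
        rw [hN]
        by_cases hNk : NN cs x y < (Nat.unpair u).1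
        · rw [hnode _ hNk (Nat.not_le.mp hk)]
        · have hd : decide (NN cs x y < (Nat.unpair u).1) = false := by
            simp [hNk]
          rw [hd]
          simp
      rw [heq, sub_self, abs_zero]
  have hsummand : Summable (fun u => |tlf cs α x z u - tlf cs α x y u|) := by
    apply Summable.of_nonneg_of_le (fun u => abs_nonneg _) hpt
    exact summable_ite_pw (c + 10)
  have h0 : tl cs α x z - tl cs α x y = ∑' u, (tlf cs α x z u - tlf cs α x y u) := by
    rw [tl_eq, tl_eq, Summable.tsum_sub (summable_tlf cs α x z) (summable_tlf cs α x y)]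
  rw [h0]
  calc |∑' u, (tlf cs α x z u - tlf cs α x y u)|
      ≤ ∑' u, |tlf cs α x z u - tlf cs α x y u| := by
        have := norm_tsum_le_tsum_norm (f := fun u => tlf cs α x z u - tlf cs α x y u)
          (by simpa [Real.norm_eq_abs] using hsummand)
        simpa [Real.norm_eq_abs] using this
    _ ≤ ∑' u, (if K ≤ (Nat.unpair u).1 then pw (c + 10 + 2*u) else 0) :=
        Summable.tsum_le_tsum hpt hsummand (summable_ite_pw (c + 10))
    _ ≤ pw (c + 10 + 2*K) * (16/15) := by
        apply tsum_ite_pw_le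
        intro u hu
        exact le_trans hu (Nat.unpair_left_le u)

theorem pw_tail_small (K : ℕ) : pw (c + 10 + 2*K) * (16/15) ≤ pw (c + K) / 2 := by
  have h1 : c + 10 + 2*K = (c + K) + (K + 10) := by ring
  rw [h1, pw_add]
  have h2 : pw (K + 10) ≤ pw 10 := pw_le_pw (by omega)
  have h3 : (0:ℝ) < pw (c + K) := pw_pos _
  have h4 : pw 10 = ((4:ℝ)⁻¹)^10 := rfl
  nlinarith [pw_nonneg (K + 10)]

theorem tri_lt {x y z : X} (hxy : x ≠ y) (hyz : y ≠ z) (hxz : x ≠ z)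
    (hlt : NN cs x y < NN cs y z) :
    eF cs α x z ≤ eF cs α x y + eF cs α y z := by
  have hCyz : ∀ k, k < NN cs y z → cs.C k y = cs.C k z := fun k hk => C_eq_of_lt cs hk
  have hNxz : NN cs x z = NN cs x y := by
    apply NN_eq
    · intro k hk
      rw [C_eq_of_lt cs hk]
      exact hCyz k (lt_trans hk hlt)
    · rw [← hCyz _ hlt]
      exact NN_mem cs hxy
  have hsE : sE cs x z = sE cs x y := by
    unfold sE
    rw [hNxz, ← hCyz _ hlt]
  have hA0 : A0 cs x z = A0 cs x y := by
    unfold A0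
    rw [hNxz, hsE]
  have hnode : ∀ k, NN cs x y < k → k < NN cs y z → nodeAt cs k x z = nodeAt cs k x y := by
    intro k _ hk
    unfold nodeAt
    rw [← hCyz k hk]
  have hdiff := tl_diff cs α hNxz hnode
  have hKb := pw_tail_small (c := c) (NN cs y z)
  have h3 := omega_le_eF cs α hyz
  rw [eF_of_ne cs α hxz, eF_of_ne cs α hxy, hA0, hNxz]
  have habs := abs_le.mp hdiff
  linarith [habs.2]

theorem eF_triangle (x y z : X) : eF cs α x z ≤ eF cs α x y + eF cs α y z := by
  by_cases hxz : x = z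
  · subst hxz
    rw [eF_self]
    exact add_nonneg (eF_nonneg cs α x y) (eF_nonneg cs α y x)
  by_cases hxy : x = y
  · subst hxy
    rw [eF_self, zero_add]
  by_cases hyz : y = z
  · subst hyz
    rw [eF_self, add_zero]
  rcases lt_trichotomy (NN cs x y) (NN cs y z) with h | h | h
  · exact tri_lt cs α hxy hyz hxz h
  · have hu : min (NN cs x y) (NN cs y z) ≤ NN cs x z := NN_ultra cs hxz
    rw [← h, min_self] at hu
    have h1 := eF_upper cs α hxz
    have h2 := eF_lower cs α hxy
    have h3 := eF_lower cs α hyz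
    have hd := d.triangle x y z
    have hm : pw (c + NN cs x z) ≤ pw (c + NN cs x y) := pw_le_pw (by omega)
    have hp := pw_pos (c + NN cs x y)
    rw [← h] at h3
    linarith
  · have h' : NN cs z y < NN cs y x := by
      rw [NN_symm cs z y, NN_symm cs y x]
      exact h
    have htri := tri_lt cs α (fun he => hyz he.symm) (fun he => hxy he.symm)
      (fun he => hxz he.symm) h'
    rw [eF_symm cs α z x, eF_symm cs α z y, eF_symm cs α y x] at htri
    linarith

end Construction3
end SR13
namespace SR13
open Set Topology

section Construction4

variable {X : Type*} [TopologicalSpace X] {d : MetricOn X} {c : ℕ}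
variable (cs : Cells X d c) (α : ℕ × Set (Set X) → ℕ → Bool)

noncomputable def tlB (x y : X) (w : ℕ) : Bool :=
  decide (NN cs x y < (Nat.unpair w).1)
    && α ((Nat.unpair w).1, nodeAt cs (Nat.unpair w).1 x y) (Nat.unpair w).2

theorem tlf_eq_tlB (x y : X) (w : ℕ) :
    tlf cs α x y w = if tlB cs α x y w = true then pw (posn c w) else 0 := rfl

theorem summable_ite_bool (B : ℕ → Bool) :
    Summable (fun w => if B w = true then pw (posn c w) else 0) := by
  have : (fun w => if B w = true then pw (posn c w) else 0) =
      (fun w => if B w = true then pw (c + 10 + 2*w) else 0) := rfl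
  rw [this]
  exact summable_ite_pw (c + 10)

theorem tl_split (x y : X) (Gth : ℕ) : tl cs α x y =
    (∑' w, if (tlB cs α x y w && decide (posn c w ≤ Gth)) = true then pw (posn c w) else 0)
    + (∑' w, if (tlB cs α x y w && decide (Gth < posn c w)) = true then pw (posn c w) else 0) := by
  rw [tl_eq, ← Summable.tsum_add (summable_ite_bool (fun w => tlB cs α x y w && decide (posn c w ≤ Gth)))
    (summable_ite_bool (fun w => tlB cs α x y w && decide (Gth < posn c w)))]
  apply tsum_congr
  intro w
  rw [tlf_eq_tlB]
  rcases Bool.eq_false_or_eq_true (tlB cs α x y w) with hB | hB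
  · rcases le_or_gt (posn c w) Gth with h | h
    · simp [hB, h, Nat.not_lt.mpr h]
    · simp [hB, h, Nat.not_le.mpr h]
  · simp [hB]

theorem pw_eq_mul {a b : ℕ} (h : a ≤ b) : pw a = (4:ℝ)^(b - a) * pw b := by
  rw [pw, pw, inv_pow, inv_pow, pow_sub₀ (4:ℝ) (by norm_num) h]
  field_simp

theorem coarse_int (x y : X) (m'' : ℕ) (hm : NN cs x y ≤ m'') :
    ∃ a : ℕ, A0 cs x y + pw (c + NN cs x y) +
      (∑' w, if (tlB cs α x y w && decide (posn c w ≤ GG c m'')) = true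
        then pw (posn c w) else 0)
      = (a : ℝ) * pw (GG c m'') := by
  have hG : GG c (NN cs x y) ≤ GG c m'' := by unfold GG; omega
  have hcm : c + NN cs x y ≤ GG c m'' := by unfold GG; omega
  have hA0 : A0 cs x y = ((⌈sE cs x y * 4 ^ (GG c (NN cs x y))⌉₊ *
      4^(GG c m'' - GG c (NN cs x y)) : ℕ) : ℝ) * pw (GG c m'') := by
    unfold A0
    rw [pw_eq_mul hG]
    push_cast
    ring
  have hpwm : pw (c + NN cs x y) = ((4^(GG c m'' - (c + NN cs x y)) : ℕ) : ℝ) * pw (GG c m'') := by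
    rw [pw_eq_mul hcm]
    push_cast
    ring
  have hsupp : ∀ w ∉ Finset.range (GG c m'' + 1),
      (if (tlB cs α x y w && decide (posn c w ≤ GG c m'')) = true
        then pw (posn c w) else 0) = 0 := by
    intro w hw
    rw [Finset.mem_range, Nat.not_lt] at hw
    have : ¬ (posn c w ≤ GG c m'') := by unfold posn; omega
    simp [this]
  rw [tsum_eq_sum hsupp]
  have hterm : ∀ w ∈ Finset.range (GG c m'' + 1),
      (if (tlB cs α x y w && decide (posn c w ≤ GG c m'')) = true
        then pw (posn c w) else 0)
      = ((if (tlB cs α x y w && decide (posn c w ≤ GG c m'')) = true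
          then 4^(GG c m'' - posn c w) else 0 : ℕ) : ℝ) * pw (GG c m'') := by
    intro w _
    split
    · next hcond =>
      rw [Bool.and_eq_true, decide_eq_true_iff] at hcond
      rw [pw_eq_mul hcond.2]
      push_cast
      ring
    · simp
  rw [Finset.sum_congr rfl hterm, ← Finset.sum_mul]
  refine ⟨(⌈sE cs x y * 4 ^ (GG c (NN cs x y))⌉₊ * 4^(GG c m'' - GG c (NN cs x y)))
      + 4^(GG c m'' - (c + NN cs x y))
      + ∑ w ∈ Finset.range (GG c m'' + 1),
          (if (tlB cs α x y w && decide (posn c w ≤ GG c m'')) = true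
            then 4^(GG c m'' - posn c w) else 0), ?_⟩
  rw [hA0, hpwm]
  push_cast
  ring

theorem fine_le (x y : X) (m'' : ℕ) :
    (∑' w, if (tlB cs α x y w && decide (GG c m'' < posn c w)) = true
      then pw (posn c w) else 0) ≤ pw (GG c m'') * (4/15) := by
  set M0 : ℕ := (m'' - 5) / 2 with hM0
  have h1 : (∑' w, if (tlB cs α x y w && decide (GG c m'' < posn c w)) = true
      then pw (posn c w) else 0)
      ≤ pw ((c + 10) + 2 * M0) * (16/15) := by
    have : (fun w => if (tlB cs α x y w && decide (GG c m'' < posn c w)) = true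
        then pw (posn c w) else 0)
        = (fun w => if (tlB cs α x y w && decide (GG c m'' < posn c w)) = true
        then pw ((c+10) + 2*w) else 0) := rfl
    rw [this]
    apply tsum_ite_pw_le
    intro w hw
    rw [Bool.and_eq_true, decide_eq_true_iff] at hw
    have := hw.2
    unfold GG posn at this
    omega
  refine le_trans h1 ?_
  have h2 : GG c m'' + 1 ≤ (c + 10) + 2 * M0 := by
    unfold GG
    omega
  have h3 : pw ((c+10) + 2*M0) ≤ pw (GG c m'' + 1) := pw_le_pw h2
  have h4 : pw (GG c m'' + 1) = pw (GG c m'') * (4:ℝ)⁻¹ := by rw [pw_add]; norm_num [pw]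
  have h5 := pw_pos (GG c m'')
  nlinarith

theorem fine_to_digits (x y u v : X)
    (hfe : (∑' w, if (tlB cs α x y w && decide (GG c (NN cs u v) < posn c w)) = true
        then pw (posn c w) else 0)
      = ∑' w, if (tlB cs α u v w && decide (GG c (NN cs u v) < posn c w)) = true
        then pw (posn c w) else 0) :
    (fun w => tlB cs α x y w && decide (GG c (NN cs u v) < posn c w))
      = (fun w => tlB cs α u v w && decide (GG c (NN cs u v) < posn c w)) := by
  apply digit_ext (s := ((4:ℝ)⁻¹)^2) (by norm_num) (by norm_num)
  have key : ∀ (B : ℕ → Bool),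
      (∑' w, if B w = true then (((4:ℝ)⁻¹)^2)^w else 0)
      = (pw (c+10))⁻¹ * ∑' w, if B w = true then pw (posn c w) else 0 := by
    intro B
    rw [← tsum_mul_left]
    apply tsum_congr
    intro w
    have : pw (posn c w) = pw (c+10) * (((4:ℝ)⁻¹)^2)^w := by
      show pw ((c+10) + 2*w) = _
      rw [pw_add]
      congr 1
      rw [pw, ← pow_mul]
    split
    · rw [this, ← mul_assoc, inv_mul_cancel₀ (pw_pos (c+10)).ne', one_mul]
    · simp
  rw [key, key, hfe]

end Construction4
end SR13
namespace SR13
open Set Topology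

section Construction5

variable {X : Type*} [TopologicalSpace X] {d : MetricOn X} {c : ℕ}
variable (cs : Cells X d c) (α : ℕ × Set (Set X) → ℕ → Bool)

def Tset (cs : Cells X d c) : Set (ℕ × Set (Set X)) :=
  {p | ∃ x y : X, x ≠ y ∧ p.2 = nodeAt cs p.1 x y}

theorem node_eq_of_high {x y u v : X} (hxy : x ≠ y) (huv : u ≠ v)
    (hα : ∀ p ∈ Tset cs, ∀ q ∈ Tset cs, α p = α q → p = q)
    (hB : (fun w => tlB cs α x y w && decide (GG c (NN cs u v) < posn c w))
        = (fun w => tlB cs α u v w && decide (GG c (NN cs u v) < posn c w)))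
    (hle : NN cs x y ≤ NN cs u v) :
    ∀ k, NN cs u v < k → nodeAt cs k x y = nodeAt cs k u v := by
  intro k hk
  have hxk : NN cs x y < k := lt_of_le_of_lt hle hk
  have hαeq : α (k, nodeAt cs k x y) = α (k, nodeAt cs k u v) := by
    funext j
    have h := congrFun hB (Nat.pair k j)
    have hpos : GG c (NN cs u v) < posn c (Nat.pair k j) := by
      have h1 : k ≤ Nat.pair k j := Nat.left_le_pair k j
      unfold GG posn
      omega
    simp only [tlB, Nat.unpair_pair] at h
    rw [decide_eq_true hxk, decide_eq_true hk, decide_eq_true hpos] at h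
    simpa using h
  have h1 : (k, nodeAt cs k x y) = (k, nodeAt cs k u v) :=
    hα _ ⟨x, y, hxy, rfl⟩ _ ⟨u, v, huv, rfl⟩ hαeq
  exact congrArg Prod.snd h1

theorem cells_eq_of_ne {x u : X} (m : ℕ)
    (h : ∀ k, m + 1 ≤ k → cs.C k x = cs.C k u) : x = u := by
  by_contra hxu
  obtain ⟨k, hk⟩ := NN_set_nonempty cs hxu
  have hK : cs.C (max k (m+1)) x = cs.C (max k (m+1)) u := h _ (le_max_right _ _)
  exact hk (C_eq_down cs hK k (le_max_left _ _))

theorem rigid_aux {x y u v : X} (hxy : x ≠ y) (huv : u ≠ v)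
    (hα : ∀ p ∈ Tset cs, ∀ q ∈ Tset cs, α p = α q → p = q)
    (hle : NN cs x y ≤ NN cs u v)
    (heq : eF cs α x y = eF cs α u v) :
    ({x, y} : Set X) = {u, v} := by
  have hsx := tl_split cs α x y (GG c (NN cs u v))
  have hsu := tl_split cs α u v (GG c (NN cs u v))
  obtain ⟨a, ha⟩ := coarse_int cs α x y (NN cs u v) hle
  obtain ⟨b, hb⟩ := coarse_int cs α u v (NN cs u v) (le_refl _)
  set tfx := (∑' w, if (tlB cs α x y w && decide (GG c (NN cs u v) < posn c w)) = true
      then pw (posn c w) else 0) with htfx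
  set tfu := (∑' w, if (tlB cs α u v w && decide (GG c (NN cs u v) < posn c w)) = true
      then pw (posn c w) else 0) with htfu
  have hEx : eF cs α x y = (a:ℝ) * pw (GG c (NN cs u v)) + tfx := by
    rw [eF_of_ne cs α hxy, hsx, ← ha]; ring
  have hEu : eF cs α u v = (b:ℝ) * pw (GG c (NN cs u v)) + tfu := by
    rw [eF_of_ne cs α huv, hsu, ← hb]; ring
  have hfx1 : tfx ≤ pw (GG c (NN cs u v)) * (4/15) := fine_le cs α x y _
  have hfu1 : tfu ≤ pw (GG c (NN cs u v)) * (4/15) := fine_le cs α u v _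
  have hfx0 : 0 ≤ tfx := tsum_nonneg (fun w => by split <;> simp [pw_nonneg])
  have hfu0 : 0 ≤ tfu := tsum_nonneg (fun w => by split <;> simp [pw_nonneg])
  have h1 : (a:ℝ) * pw (GG c (NN cs u v)) + tfx = (b:ℝ) * pw (GG c (NN cs u v)) + tfu := by
    rw [← hEx, ← hEu, heq]
  have hpw := pw_pos (GG c (NN cs u v))
  have hab : a = b := by
    by_contra hne
    rcases Nat.lt_or_ge a b with h | h
    · have hcast : (a:ℝ) + 1 ≤ (b:ℝ) := by exact_mod_cast h
      nlinarith
    · have hba : b < a := lt_of_le_of_ne h (by exact_mod_cast (Ne.symm hne))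
      have hcast : (b:ℝ) + 1 ≤ (a:ℝ) := by exact_mod_cast hba
      nlinarith
  have htf : tfx = tfu := by
    rw [hab] at h1
    linarith
  rw [htfx, htfu] at htf
  have hBeq := fine_to_digits cs α x y u v htf
  have hnode := node_eq_of_high cs α hxy huv hα hBeq hle
  -- first: NN x y = NN u v
  have hmm : NN cs x y = NN cs u v := by
    by_contra hne
    have hlt : NN cs x y < NN cs u v := lt_of_le_of_ne hle hne
    have hnd := hnode (NN cs u v + 1) (Nat.lt_succ_self _)
    rw [nodeAt, nodeAt, Set.pair_eq_pair_iff] at hnd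
    have e3 : cs.C (NN cs x y) u = cs.C (NN cs x y) v := C_eq_of_lt cs hlt
    rcases hnd with ⟨h1, h2⟩ | ⟨h1, h2⟩ <;>
    · have e1 := C_eq_down cs h1 (NN cs x y) (by omega)
      have e2 := C_eq_down cs h2 (NN cs x y) (by omega)
      apply NN_mem cs hxy
      rw [e1, e2]
      first
        | exact e3
        | exact e3.symm
  -- orientation
  have horient : ∀ k, NN cs x y < k →
      (cs.C k x = cs.C k u ∧ cs.C k y = cs.C k v) ∨
      (cs.C k x = cs.C k v ∧ cs.C k y = cs.C k u) := by
    intro k hk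
    have := hnode k (by omega)
    rw [nodeAt, nodeAt] at this
    exact Set.pair_eq_pair_iff.mp this
  have hbase := horient (NN cs x y + 1) (Nat.lt_succ_self _)
  rcases hbase with ⟨hbx, hby⟩ | ⟨hbx, hby⟩
  · -- straight orientation propagates
    have hall : ∀ k, NN cs x y + 1 ≤ k → cs.C k x = cs.C k u ∧ cs.C k y = cs.C k v := by
      intro k hk
      induction k, hk using Nat.le_induction with
      | base => exact ⟨hbx, hby⟩
      | succ k hk ih =>
        rcases horient (k+1) (by omega) with h | ⟨g1, g2⟩
        · exact h
        · exfalso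
          have e1 : cs.C k x = cs.C k v := C_eq_step cs g1
          have e2 : cs.C k y = cs.C k v := ih.2
          exact C_ne_of_ge cs hxy (by omega) (e1.trans e2.symm)
    have hxu : x = u := cells_eq_of_ne cs (NN cs x y) (fun k hk => (hall k hk).1)
    have hyv : y = v := cells_eq_of_ne cs (NN cs x y) (fun k hk => (hall k hk).2)
    rw [hxu, hyv]
  · -- crossed orientation propagates
    have hall : ∀ k, NN cs x y + 1 ≤ k → cs.C k x = cs.C k v ∧ cs.C k y = cs.C k u := by
      intro k hk
      induction k, hk using Nat.le_induction with
      | base => exact ⟨hbx, hby⟩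
      | succ k hk ih =>
        rcases horient (k+1) (by omega) with ⟨g1, g2⟩ | h
        · exfalso
          have e1 : cs.C k x = cs.C k u := C_eq_step cs g1
          have e2 : cs.C k y = cs.C k u := ih.2
          exact C_ne_of_ge cs hxy (by omega) (e1.trans e2.symm)
        · exact h
    have hxv : x = v := cells_eq_of_ne cs (NN cs x y) (fun k hk => (hall k hk).1)
    have hyu : y = u := cells_eq_of_ne cs (NN cs x y) (fun k hk => (hall k hk).2)
    rw [hxv, hyu]
    exact Set.pair_comm v u

theorem eF_rigid (hα : ∀ p ∈ Tset cs, ∀ q ∈ Tset cs, α p = α q → p = q)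
    {x y u v : X} (hxy : x ≠ y) (huv : u ≠ v)
    (heq : eF cs α x y = eF cs α u v) :
    ({x, y} : Set X) = {u, v} := by
  rcases le_total (NN cs x y) (NN cs u v) with h | h
  · exact rigid_aux cs α hxy huv hα h heq
  · exact (rigid_aux cs α huv hxy hα h heq.symm).symm

end Construction5
end SR13
namespace SR13
open Set Topology

section Assemble

variable {X : Type} [TopologicalSpace X] {d : MetricOn X} {c : ℕ}
variable (cs : Cells X d c) (α : ℕ × Set (Set X) → ℕ → Bool)

theorem d_le_eF_all (x y : X) : d.toFun x y ≤ eF cs α x y := by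
  by_cases hxy : x = y
  · subst hxy; rw [d.refl, eF_self]
  · exact d_le_eF cs α hxy

theorem eF_isOpen_iff (s : Set X) :
    IsOpen s ↔ ∀ x ∈ s, ∃ ε > 0, ∀ y, eF cs α x y < ε → y ∈ s := by
  constructor
  · intro hs x hx
    obtain ⟨ε, hε, hb⟩ := (d.isOpen_iff s).mp hs x hx
    exact ⟨ε, hε, fun y hy => hb y (lt_of_le_of_lt (d_le_eF_all cs α x y) hy)⟩
  · intro h
    rw [isOpen_iff_mem_nhds]
    intro x hx
    obtain ⟨ε, hε, hb⟩ := h x hx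
    obtain ⟨k₀, hk₀⟩ := exists_pow_lt_of_lt_one (half_pos hε) (by norm_num : (4:ℝ)⁻¹ < 1)
    set k := k₀ + 1 with hk
    have hpwk : pw (c + k) < ε / 2 := by
      calc pw (c + k) ≤ pw k := pw_le_pw (Nat.le_add_left k c)
        _ ≤ pw k₀ := pw_le_pw (by omega)
        _ < ε / 2 := hk₀
    have hsub : cs.C k x ⊆ {y | eF cs α x y < ε} := by
      intro y hy
      simp only [mem_setOf_eq]
      by_cases hxy : x = y
      · subst hxy; rw [eF_self]; exact hε
      · have hNN : k < NN cs x y := lt_NN_of_mem cs hxy hy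
        have hd : d.toFun x y ≤ pw (c + k) / 64 :=
          cs.small k (by omega) x x y (cs.mem k x) hy
        have hup := eF_upper cs α hxy
        have hm : pw (c + NN cs x y) ≤ pw (c + k) := pw_le_pw (by omega)
        have hp := pw_pos (c + k)
        calc eF cs α x y ≤ d.toFun x y + (33/32) * pw (c + NN cs x y) := hup
          _ ≤ pw (c + k) / 64 + (33/32) * pw (c + k) := by linarith
          _ ≤ 2 * pw (c + k) := by linarith
          _ < ε := by linarith
    exact mem_nhds_iff.mpr ⟨cs.C k x, fun y hy => hb y (hsub hy), (cs.clopen k x).2, cs.mem k x⟩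

theorem eF_eq_of {x y : X} (h : eF cs α x y = 0) : x = y := by
  by_contra hxy
  have := omega_le_eF cs α hxy
  have := pw_pos (c + NN cs x y)
  linarith [h ▸ this]

end Assemble

theorem main_approx {X : Type} [TopologicalSpace X] [TopologicalSpace.MetrizableSpace X]
    (hX : StronglyZeroDim X) (hcard : Cardinal.mk X ≤ Cardinal.continuum)
    (d : MetricOn X) (ε : ℝ) (hε : 0 < ε) :
    ∃ e : MetricOn X, StronglyRigid e ∧ ∀ x y, |d.toFun x y - e.toFun x y| ≤ ε := by
  classical
  obtain ⟨c, hc⟩ := exists_pow_lt_of_lt_one hε (by norm_num : (4:ℝ)⁻¹ < 1)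
  have hpwc : pw c < ε := hc
  obtain ⟨cs⟩ := exists_cells hX d c
  -- build an injection of the nodes into ℕ → Bool
  have hcard2 : Cardinal.mk (Tset cs) ≤ Cardinal.mk (ℕ → Bool) := by
    have h1 : Cardinal.mk (Tset cs) ≤ Cardinal.mk (ℕ × X × X) := by
      have hsub : (Tset cs) ⊆ Set.range (fun p : ℕ × X × X => (p.1, nodeAt cs p.1 p.2.1 p.2.2)) := by
        rintro ⟨k, S⟩ ⟨x, y, hxy, hS⟩
        simp only at hS
        exact ⟨(k, x, y), by simp only; rw [← hS]⟩
      calc Cardinal.mk (Tset cs)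
          ≤ Cardinal.mk (Set.range (fun p : ℕ × X × X => (p.1, nodeAt cs p.1 p.2.1 p.2.2))) :=
            Cardinal.mk_le_mk_of_subset hsub
        _ ≤ Cardinal.mk (ℕ × X × X) := Cardinal.mk_range_le
    have h2 : Cardinal.mk (ℕ × X × X) ≤ Cardinal.continuum := by
      rw [Cardinal.mk_prod, Cardinal.mk_prod]
      simp only [Cardinal.lift_id]
      calc Cardinal.mk ℕ * (Cardinal.mk X * Cardinal.mk X)
          ≤ Cardinal.continuum * (Cardinal.continuum * Cardinal.continuum) := by
            apply mul_le_mul'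
            · rw [Cardinal.mk_nat]; exact Cardinal.aleph0_le_continuum
            · exact mul_le_mul' hcard hcard
        _ = Cardinal.continuum := by
            rw [Cardinal.continuum_mul_self, Cardinal.continuum_mul_self]
    have h3 : Cardinal.mk (ℕ → Bool) = Cardinal.continuum := by
      rw [Cardinal.mk_arrow]
      simp [Cardinal.mk_bool, Cardinal.mk_nat, Cardinal.two_power_aleph0]
    rw [h3]
    exact le_trans h1 h2
  obtain ⟨emb⟩ := Cardinal.le_def _ _ |>.mp hcard2
  set α : ℕ × Set (Set X) → ℕ → Bool := fun p =>
    if h : p ∈ Tset cs then emb ⟨p, h⟩ else (fun _ => false) with hα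
  have hαinj : ∀ p ∈ Tset cs, ∀ q ∈ Tset cs, α p = α q → p = q := by
    intro p hp q hq hpq
    rw [hα] at hpq
    simp only [dif_pos hp, dif_pos hq] at hpq
    have hsub : (⟨p, hp⟩ : Tset cs) = ⟨q, hq⟩ := emb.injective hpq
    exact congrArg Subtype.val hsub
  set e : MetricOn X := {
    toFun := eF cs α
    symm := eF_symm cs α
    refl := eF_self cs α
    eq_of := fun x y h => eF_eq_of cs α h
    triangle := eF_triangle cs α
    isOpen_iff := eF_isOpen_iff cs α } with he
  refine ⟨e, ?_, ?_⟩
  · intro x y u v heq hne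
    have hxy : x ≠ y := by
      intro h; subst h
      rw [he] at hne
      exact hne (eF_self cs α x)
    have huv : u ≠ v := by
      intro h; subst h
      apply hne
      show eF cs α x y = 0
      have h2 : e.toFun u u = 0 := e.refl u
      rw [← heq] at h2
      exact h2
    exact eF_rigid cs α hαinj hxy huv heq
  · intro x y
    by_cases hxy : x = y
    · subst hxy
      rw [he]
      show |d.toFun x x - eF cs α x x| ≤ ε
      rw [d.refl, eF_self cs α]
      simpa using hε.le
    · show |d.toFun x y - eF cs α x y| ≤ ε
      have hlo := d_le_eF cs α (x := x) (y := y) hxy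
      have hup := eF_upper cs α (x := x) (y := y) hxy
      have hNN : 1 ≤ NN cs x y := NN_pos cs hxy
      have hm : pw (c + NN cs x y) ≤ pw (c + 1) := pw_le_pw (by omega)
      have hce : pw (c+1) = pw c * (4:ℝ)⁻¹ := by rw [pw_add]; norm_num [pw]
      have hp := pw_pos c
      rw [abs_sub_comm, abs_of_nonneg (by linarith)]
      linarith

end SR13
namespace SR13
open Set Topology

variable {X : Type} [TopologicalSpace X]

theorem supDist_self (e : MetricOn X) : supDist e e = 0 := by
  simp [supDist]

theorem isOpen_of_balls {S : Set (MetricOn X)} (h : ∀ e ∈ S, ∃ r > (0:ℝ), MBall e r ⊆ S) :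
    IsOpen S := by
  have : S = ⋃ e : S, MBall e.1 (h e.1 e.2).choose := by
    apply Set.eq_of_subset_of_subset
    · intro e he
      apply mem_iUnion.mpr
      refine ⟨⟨e, he⟩, ?_⟩
      show supDist e e < ENNReal.ofReal _
      rw [supDist_self]
      exact ENNReal.ofReal_pos.mpr (h e he).choose_spec.1
    · intro f hf
      obtain ⟨e, hef⟩ := mem_iUnion.mp hf
      exact (h e.1 e.2).choose_spec.2 hef
  rw [this]
  exact isOpen_iUnion fun e => isOpen_MBall _ (h e.1 e.2).choose_spec.1

theorem dense_SR [TopologicalSpace.MetrizableSpace X]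
    (hX : StronglyZeroDim X) (hcard : Cardinal.mk X ≤ Cardinal.continuum) :
    Dense {e : MetricOn X | StronglyRigid e} := by
  rw [dense_iff_inter_open]
  rintro U hU ⟨e₀, he₀⟩
  obtain ⟨r, hr, hball⟩ := exists_ball_subset hU e₀ he₀
  obtain ⟨e, he1, he2⟩ := main_approx hX hcard e₀ (r/2) (half_pos hr)
  refine ⟨e, hball ?_, he1⟩
  show supDist e₀ e < ENNReal.ofReal r
  calc supDist e₀ e ≤ ENNReal.ofReal (r/2) := supDist_le_of he2
    _ < ENNReal.ofReal r := (ENNReal.ofReal_lt_ofReal_iff hr).mpr (by linarith)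

section Gdelta

variable [SigmaCompactSpace X]

/-- the "bad set" witnessing failure of strong rigidity at scale `1/(m+1)`
inside the `n`-th compact piece -/
def Fbad (n m : ℕ) : Set (MetricOn X) :=
  {e | ∃ x ∈ compactCovering X n, ∃ y ∈ compactCovering X n,
    ∃ u ∈ compactCovering X n, ∃ v ∈ compactCovering X n,
    e.toFun x y = e.toFun u v ∧ 1/((m:ℝ)+1) ≤ e.toFun x y ∧
    1/((m:ℝ)+1) ≤ e.toFun x u + e.toFun y v ∧ 1/((m:ℝ)+1) ≤ e.toFun x v + e.toFun y u}

theorem SR_eq_iInter :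
    {e : MetricOn X | StronglyRigid e} = ⋂ p : ℕ × ℕ, (Fbad p.1 p.2)ᶜ := by
  apply Set.eq_of_subset_of_subset
  · intro e he
    apply mem_iInter.mpr
    rintro ⟨n, m⟩ ⟨x, hx, y, hy, u, hu, v, hv, h1, h2, h3, h4⟩
    have hm : (0:ℝ) < 1/((m:ℝ)+1) := by positivity
    have hne : e.toFun x y ≠ 0 := by linarith
    have hset := he x y u v h1 hne
    rcases Set.pair_eq_pair_iff.mp hset with ⟨rfl, rfl⟩ | ⟨rfl, rfl⟩
    · rw [e.refl, e.refl] at h3; linarith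
    · rw [e.refl, e.refl] at h4; linarith
  · intro e he
    intro x y u v h1 hne
    by_contra hset
    have hxy : x ≠ y := by
      intro h; subst h; exact hne (e.refl x)
    have huv : u ≠ v := by
      intro h; subst h; rw [h1] at hne; exact hne (e.refl u)
    have hpos : 0 < e.toFun x y := lt_of_le_of_ne (e.nonneg x y) (Ne.symm hne)
    have hm1 : 0 < e.toFun x u + e.toFun y v := by
      rcases lt_or_eq_of_le (add_nonneg (e.nonneg x u) (e.nonneg y v)) with h | h
      · exact h
      · exfalso
        have hxu : e.toFun x u = 0 := by
          have := e.nonneg x u; have := e.nonneg y v; linarith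
        have hyv : e.toFun y v = 0 := by
          have := e.nonneg x u; have := e.nonneg y v; linarith
        rw [e.eq_of x u hxu, e.eq_of y v hyv] at hset
        exact hset rfl
    have hm2 : 0 < e.toFun x v + e.toFun y u := by
      rcases lt_or_eq_of_le (add_nonneg (e.nonneg x v) (e.nonneg y u)) with h | h
      · exact h
      · exfalso
        have hxv : e.toFun x v = 0 := by
          have := e.nonneg x v; have := e.nonneg y u; linarith
        have hyu : e.toFun y u = 0 := by
          have := e.nonneg x v; have := e.nonneg y u; linarith
        rw [e.eq_of x v hxv, e.eq_of y u hyu] at hset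
        exact hset (Set.pair_comm v u)
    -- find n
    have hK : ∀ z : X, ∃ n, z ∈ compactCovering X n := by
      intro z
      have : z ∈ ⋃ n, compactCovering X n := by
        rw [iUnion_compactCovering]; trivial
      exact mem_iUnion.mp this
    obtain ⟨n1, hn1⟩ := hK x
    obtain ⟨n2, hn2⟩ := hK y
    obtain ⟨n3, hn3⟩ := hK u
    obtain ⟨n4, hn4⟩ := hK v
    set n := max (max n1 n2) (max n3 n4) with hn
    -- find m
    obtain ⟨m, hm⟩ := exists_nat_one_div_lt (show (0:ℝ) <
      min (e.toFun x y) (min (e.toFun x u + e.toFun y v) (e.toFun x v + e.toFun y u)) by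
      simp only [lt_min_iff]; exact ⟨hpos, hm1, hm2⟩)
    have hmem : e ∈ Fbad n m := by
      refine ⟨x, compactCovering_subset X (by omega) hn1,
        y, compactCovering_subset X (by omega) hn2,
        u, compactCovering_subset X (by omega) hn3,
        v, compactCovering_subset X (by omega) hn4, h1, ?_, ?_, ?_⟩ <;>
      · rw [show ((m:ℝ)+1) = ((m:ℝ)+1) from rfl]
        simp only [lt_min_iff] at hm
        push_cast at hm ⊢
        linarith [hm.1, hm.2.1, hm.2.2]
    have := mem_iInter.mp he (n, m)
    exact this hmem

theorem isOpen_Fbad_compl (n m : ℕ) : IsOpen ((Fbad n m : Set (MetricOn X))ᶜ) := by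
  apply isOpen_of_balls
  intro e he
  by_cases hne : ((compactCovering X n ×ˢ compactCovering X n) ×ˢ
      (compactCovering X n ×ˢ compactCovering X n) : Set ((X × X) × (X × X))).Nonempty
  swap
  · refine ⟨1, one_pos, fun f _ hf => ?_⟩
    obtain ⟨x, hx, y, hy, u, hu, v, hv, _⟩ := hf
    exact hne ⟨((x,y),(u,v)), ⟨⟨hx, hy⟩, ⟨hu, hv⟩⟩⟩
  · set K := compactCovering X n with hK
    set W := ((K ×ˢ K) ×ˢ (K ×ˢ K) : Set ((X × X) × (X × X))) with hW
    have hWc : IsCompact W :=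
      (((isCompact_compactCovering X n).prod (isCompact_compactCovering X n)).prod
        ((isCompact_compactCovering X n).prod (isCompact_compactCovering X n)))
    set φ : (X × X) × (X × X) → ℝ := fun q =>
      |e.toFun q.1.1 q.1.2 - e.toFun q.2.1 q.2.2|
      + max (1/((m:ℝ)+1) - e.toFun q.1.1 q.1.2) 0
      + max (1/((m:ℝ)+1) - (e.toFun q.1.1 q.2.1 + e.toFun q.1.2 q.2.2)) 0
      + max (1/((m:ℝ)+1) - (e.toFun q.1.1 q.2.2 + e.toFun q.1.2 q.2.1)) 0 with hφ
    have hc := e.continuousFun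
    have hφc : Continuous φ := by
      apply Continuous.add
      apply Continuous.add
      apply Continuous.add
      · apply Continuous.abs
        apply Continuous.sub
        · exact hc.comp ((continuous_fst.comp continuous_fst).prodMk
            (continuous_snd.comp continuous_fst))
        · exact hc.comp ((continuous_fst.comp continuous_snd).prodMk
            (continuous_snd.comp continuous_snd))
      · apply Continuous.max _ continuous_const
        apply Continuous.sub continuous_const
        exact hc.comp ((continuous_fst.comp continuous_fst).prodMk
          (continuous_snd.comp continuous_fst))
      · apply Continuous.max _ continuous_const
        apply Continuous.sub continuous_const
        apply Continuous.add
        · exact hc.comp ((continuous_fst.comp continuous_fst).prodMk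
            (continuous_fst.comp continuous_snd))
        · exact hc.comp ((continuous_snd.comp continuous_fst).prodMk
            (continuous_snd.comp continuous_snd))
      · apply Continuous.max _ continuous_const
        apply Continuous.sub continuous_const
        apply Continuous.add
        · exact hc.comp ((continuous_fst.comp continuous_fst).prodMk
            (continuous_snd.comp continuous_snd))
        · exact hc.comp ((continuous_snd.comp continuous_fst).prodMk
            (continuous_fst.comp continuous_snd))
    obtain ⟨q₀, hq₀, hmin⟩ := hWc.exists_isMinOn hne hφc.continuousOn
    have hγpos : 0 < φ q₀ := by
      rcases lt_or_eq_of_le (by positivity : (0:ℝ) ≤ φ q₀) with h | h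
      · exact h
      · exfalso
        apply he
        obtain ⟨⟨hx, hy⟩, hu, hv⟩ := hq₀
        have t1 : |e.toFun q₀.1.1 q₀.1.2 - e.toFun q₀.2.1 q₀.2.2| = 0 ∧
            max (1/((m:ℝ)+1) - e.toFun q₀.1.1 q₀.1.2) 0 = 0 ∧
            max (1/((m:ℝ)+1) - (e.toFun q₀.1.1 q₀.2.1 + e.toFun q₀.1.2 q₀.2.2)) 0 = 0 ∧
            max (1/((m:ℝ)+1) - (e.toFun q₀.1.1 q₀.2.2 + e.toFun q₀.1.2 q₀.2.1)) 0 = 0 := by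
          have e1 : (0:ℝ) ≤ |e.toFun q₀.1.1 q₀.1.2 - e.toFun q₀.2.1 q₀.2.2| := abs_nonneg _
          have e2 : (0:ℝ) ≤ max (1/((m:ℝ)+1) - e.toFun q₀.1.1 q₀.1.2) 0 := le_max_right _ _
          have e3 : (0:ℝ) ≤ max (1/((m:ℝ)+1) -
              (e.toFun q₀.1.1 q₀.2.1 + e.toFun q₀.1.2 q₀.2.2)) 0 := le_max_right _ _
          have e4 : (0:ℝ) ≤ max (1/((m:ℝ)+1) -
              (e.toFun q₀.1.1 q₀.2.2 + e.toFun q₀.1.2 q₀.2.1)) 0 := le_max_right _ _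
          rw [hφ] at h
          simp only at h
          refine ⟨by linarith, by linarith, by linarith, by linarith⟩
        obtain ⟨t1, t2, t3, t4⟩ := t1
        refine ⟨q₀.1.1, hx, q₀.1.2, hy, q₀.2.1, hu, q₀.2.2, hv, ?_, ?_, ?_, ?_⟩
        · have := abs_eq_zero.mp t1; linarith
        · have := max_eq_right_iff.mp t2; linarith
        · have := max_eq_right_iff.mp t3; linarith
        · have := max_eq_right_iff.mp t4; linarith
    refine ⟨φ q₀ / 8, by positivity, ?_⟩
    intro f hfb
    rw [Set.mem_compl_iff]
    intro hf
    obtain ⟨x, hx, y, hy, u, hu, v, hv, g1, g2, g3, g4⟩ := hf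
    have hqW : (((x,y),(u,v)) : (X × X) × (X × X)) ∈ W := ⟨⟨hx, hy⟩, ⟨hu, hv⟩⟩
    have hmin' : φ q₀ ≤ φ ((x,y),(u,v)) := hmin hqW
    have habs := abs_lt_of_supDist_lt (by positivity : (0:ℝ) < φ q₀ / 8) hfb
    have a1 := abs_lt.mp (habs x y)
    have a2 := abs_lt.mp (habs u v)
    have a3 := abs_lt.mp (habs x u)
    have a4 := abs_lt.mp (habs y v)
    have a5 := abs_lt.mp (habs x v)
    have a6 := abs_lt.mp (habs y u)
    have hq : φ ((x,y),(u,v)) =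
        |e.toFun x y - e.toFun u v|
        + max (1/((m:ℝ)+1) - e.toFun x y) 0
        + max (1/((m:ℝ)+1) - (e.toFun x u + e.toFun y v)) 0
        + max (1/((m:ℝ)+1) - (e.toFun x v + e.toFun y u)) 0 := rfl
    have hb1 : |e.toFun x y - e.toFun u v| < φ q₀ / 4 := by
      rw [abs_lt]
      constructor <;> linarith [a1.1, a1.2, a2.1, a2.2]
    have hb2 : max (1/((m:ℝ)+1) - e.toFun x y) 0 < φ q₀ / 8 :=
      max_lt (by linarith [a1.1, a1.2]) (by positivity)
    have hb3 : max (1/((m:ℝ)+1) - (e.toFun x u + e.toFun y v)) 0 < φ q₀ / 4 :=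
      max_lt (by linarith [a3.1, a3.2, a4.1, a4.2]) (by positivity)
    have hb4 : max (1/((m:ℝ)+1) - (e.toFun x v + e.toFun y u)) 0 < φ q₀ / 4 :=
      max_lt (by linarith [a5.1, a5.2, a6.1, a6.2]) (by positivity)
    rw [hq] at hmin'
    linarith

end Gdelta
end SR13

/-- For a strongly zero-dimensional metrizable space `X` with
`card X ≤ 𝔠`, every metric in `Met(X)` is `ε`-approximated by a strongly rigid one, i.e.
the set `SR(X)` of strongly rigid metrics is dense in `(Met(X), D_X)`; moreover, if `X`
is `σ`-compact, then `SR(X)` is a dense `Gδ` subset of `(Met(X), D_X)`. -/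
theorem stmt13 {X : Type} [TopologicalSpace X] [TopologicalSpace.MetrizableSpace X]
    (hX : StronglyZeroDim X) (hcard : Cardinal.mk X ≤ Cardinal.continuum) :
    (∀ d : MetricOn X, ∀ ε : ℝ, 0 < ε → ∃ e : MetricOn X,
        StronglyRigid e ∧ ∀ x y, |d.toFun x y - e.toFun x y| ≤ ε) ∧
    Dense {e : MetricOn X | StronglyRigid e} ∧
    (SigmaCompactSpace X →
      Dense {e : MetricOn X | StronglyRigid e} ∧ IsGδ {e : MetricOn X | StronglyRigid e}) := by
  refine ⟨fun d ε hε => SR13.main_approx hX hcard d ε hε, SR13.dense_SR hX hcard, ?_⟩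
  intro hσ
  haveI := hσ
  refine ⟨SR13.dense_SR hX hcard, ?_⟩
  rw [SR13.SR_eq_iInter]
  exact IsGδ.iInter fun p => (SR13.isOpen_Fbad_compl p.1 p.2).isGδ
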